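/- arXiv:2106.12437 — 3 statements merged into one kernel-verified Lean document; each statement's English description precedes it below -/
import Mathlib

section
/- Let ι be an index type, (H i) a family of complex Hilbert spaces, and K = lp (fun i => H i) 2 their ℓ²-Hilbert direct sum with canonical isometric embeddings V i : H i →ₗᵢ[ℂ] K. Let M ≥ 0, let (T_j) be a net of continuous linear operators on K with ‖T_j‖ ≤ M for all j, and let T be a continuous linear operator on K with ‖T‖ ≤ M. Assume all the operators are block diagonal, i.e. for every index i and every x ∈ H i one has T_j (V i x) ∈ Set.range (V i) for all j and T (V i x) ∈ Set.range (V i). Then T_j converges to T in the weak operator topology on K if and only if for every index i and all x, y ∈ H i one has ⟪T_j (V i x), V i y⟫ → ⟪T (V i x), V i y⟫. -/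
open Filter Topology
open scoped ComplexInnerProductSpace ENNReal

/-- The canonical isometric embedding of the `i`-th summand into the `ℓ²`-Hilbert
direct sum `lp H 2`. -/
noncomputable def hilbertSumSingle {ι : Type*} [DecidableEq ι] (H : ι → Type*)
    [∀ i, NormedAddCommGroup (H i)] [∀ i, InnerProductSpace ℂ (H i)] (i : ι) :
    H i →ₗᵢ[ℂ] lp H 2 where
  toFun x := lp.single 2 i x
  map_add' x y := by
    apply lp.ext
    funext j
    by_cases h : j = i
    · subst h
      simp [lp.single_apply_self, lp.coeFn_add]
    · simp [lp.single_apply_ne _ _ _ h, lp.coeFn_add]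
  map_smul' c x := by simp [lp.single_smul]
  norm_map' x := by
    have h2 : 0 < (2 : ℝ≥0∞).toReal := by norm_num
    simpa using lp.norm_single h2 (Function.update (fun j => (0 : H j)) i x) i


/-- Pointwise convergence on a dense set plus uniform Lipschitz bound gives
pointwise convergence everywhere. -/
lemma tendsto_of_lipschitz_dense {K : Type*} [PseudoMetricSpace K] {J : Type*}
    (l : Filter J) [l.NeBot] (f : J → K → ℂ) (f₀ : K → ℂ) (L : NNReal)
    (hf : ∀ j, LipschitzWith L (f j)) (hf₀ : LipschitzWith L f₀)
    {s : Set K} (hs : Dense s)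
    (h : ∀ z ∈ s, Tendsto (fun j => f j z) l (𝓝 (f₀ z))) (z : K) :
    Tendsto (fun j => f j z) l (𝓝 (f₀ z)) := by
  rw [Metric.tendsto_nhds]
  intro ε hε
  set δ : ℝ := ε / (4 * (L + 1)) with hδdef
  have hLpos : (0:ℝ) < L + 1 := by positivity
  have hδpos : 0 < δ := by positivity
  obtain ⟨w, hwz, hws⟩ := Metric.dense_iff.mp hs z δ hδpos
  have hLδ : (L : ℝ) * δ ≤ ε / 4 := by
    calc (L : ℝ) * δ ≤ (L + 1) * δ := by nlinarith
    _ = ε / 4 := by rw [hδdef]; field_simp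
  filter_upwards [Metric.tendsto_nhds.mp (h w hws) (ε/4) (by positivity)] with j hj
  have hLnn : (0:ℝ) ≤ (L:ℝ) := L.coe_nonneg
  have hd : dist w z ≤ δ := le_of_lt (Metric.mem_ball.mp hwz)
  have hd' : dist z w ≤ δ := by rwa [dist_comm]
  have h1 : dist (f j z) (f j w) ≤ (L : ℝ) * δ :=
    le_trans (hf j |>.dist_le_mul z w) (by nlinarith)
  have h2 : dist (f₀ w) (f₀ z) ≤ (L : ℝ) * δ :=
    le_trans (hf₀.dist_le_mul w z) (by nlinarith)
  calc dist (f j z) (f₀ z)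
      ≤ dist (f j z) (f j w) + dist (f j w) (f₀ w) + dist (f₀ w) (f₀ z) :=
        dist_triangle4 _ _ _ _
    _ < ε := by nlinarith [h1, h2, hj]

/-- On a norm-bounded set of block diagonal operators on the `ℓ²`-Hilbert direct sum
`lp H 2` of Hilbert spaces `H i`, a net converges in the weak operator topology iff
all "matrix coefficients" against vectors from the individual summands converge. -/
theorem blockDiagonal_tendsto_wot_iff_components
    {ι : Type*} [DecidableEq ι] {H : ι → Type*}
    [∀ i, NormedAddCommGroup (H i)] [∀ i, InnerProductSpace ℂ (H i)]
    [∀ i, CompleteSpace (H i)]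
    {J : Type*} (l : Filter J) [l.NeBot]
    (M : ℝ) (hM : 0 ≤ M)
    (T : J → lp H 2 →L[ℂ] lp H 2) (hT : ∀ j, ‖T j‖ ≤ M)
    (T₀ : lp H 2 →L[ℂ] lp H 2) (hT₀ : ‖T₀‖ ≤ M)
    (hblock : ∀ (j : J) (i : ι) (x : H i),
      T j (hilbertSumSingle H i x) ∈ Set.range (hilbertSumSingle H i))
    (hblock₀ : ∀ (i : ι) (x : H i),
      T₀ (hilbertSumSingle H i x) ∈ Set.range (hilbertSumSingle H i)) :
    (∀ x y : lp H 2, Tendsto (fun j => ⟪T j x, y⟫) l (𝓝 ⟪T₀ x, y⟫)) ↔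
      ∀ (i : ι) (x y : H i),
        Tendsto (fun j => ⟪T j (hilbertSumSingle H i x), hilbertSumSingle H i y⟫) l
          (𝓝 ⟪T₀ (hilbertSumSingle H i x), hilbertSumSingle H i y⟫) := by
  constructor
  · intro h i x y; exact h _ _
  intro h x y
  set V : ∀ i, H i →ₗᵢ[ℂ] lp H 2 := fun i => hilbertSumSingle H i with hV
  set S : Submodule ℂ (lp H 2) := Submodule.span ℂ (⋃ i, Set.range (V i)) with hS
  -- density of S
  have hdense : Dense (S : Set (lp H 2)) := by
    intro f
    have hsum : HasSum (fun i : ι => lp.single 2 i (f i)) f :=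
      lp.hasSum_single ENNReal.ofNat_ne_top f
    refine mem_closure_of_tendsto hsum (Filter.Eventually.of_forall fun s => ?_)
    refine Submodule.sum_mem _ fun i _ => ?_
    exact Submodule.subset_span (Set.mem_iUnion.mpr ⟨i, ⟨f i, rfl⟩⟩)
  -- cross terms vanish
  have hcross : ∀ {i i' : ι}, i' ≠ i → ∀ (z : lp H 2), z ∈ Set.range (V i) →
      ∀ (b : H i'), ⟪z, V i' b⟫ = 0 := by
    rintro i i' hne _ ⟨u, rfl⟩ b
    show ⟪lp.single 2 i u, lp.single 2 i' b⟫ = 0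
    rw [lp.inner_single_right]
    rw [lp.single_apply_ne 2 i u hne]
    simp
  -- convergence for all pairs of singles
  have key : ∀ (i i' : ι) (a : H i) (b : H i'),
      Tendsto (fun j => ⟪T j (V i a), V i' b⟫) l (𝓝 ⟪T₀ (V i a), V i' b⟫) := by
    intro i i' a b
    by_cases hii : i' = i
    · subst hii; exact h i' a b
    · have h0 : ⟪T₀ (V i a), V i' b⟫ = 0 := hcross hii _ (hblock₀ i a) b
      have hj : ∀ j, ⟪T j (V i a), V i' b⟫ = 0 := fun j =>
        hcross hii _ (hblock j i a) b
      rw [h0]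
      simpa [hj] using (tendsto_const_nhds : Tendsto (fun _ : J => (0:ℂ)) l (𝓝 0))
  -- helpers for Lipschitz bounds
  have hTb : ∀ j (z : lp H 2), ‖T j z‖ ≤ M * ‖z‖ := fun j z =>
    (T j).le_of_opNorm_le (hT j) z
  have hT₀b : ∀ (z : lp H 2), ‖T₀ z‖ ≤ M * ‖z‖ := fun z =>
    T₀.le_of_opNorm_le hT₀ z
  -- step A: for x in the union, all y
  have stepA : ∀ (i : ι) (a : H i) (y : lp H 2),
      Tendsto (fun j => ⟪T j (V i a), y⟫) l (𝓝 ⟪T₀ (V i a), y⟫) := by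
    intro i a
    set x : lp H 2 := V i a with hx
    have hxn : ‖x‖ = ‖a‖ := (V i).norm_map a
    have hlip : ∀ (A : lp H 2 →L[ℂ] lp H 2), ‖A‖ ≤ M →
        LipschitzWith (⟨M, hM⟩ * ‖a‖₊) (fun y => ⟪A x, y⟫) := by
      intro A hA
      refine LipschitzWith.of_dist_le_mul fun y y' => ?_
      rw [dist_eq_norm, dist_eq_norm, ← inner_sub_right]
      calc ‖⟪A x, y - y'⟫‖ ≤ ‖A x‖ * ‖y - y'‖ := norm_inner_le_norm _ _
        _ ≤ (M * ‖a‖) * ‖y - y'‖ := by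
            have := A.le_of_opNorm_le hA x
            rw [hxn] at this
            exact mul_le_mul_of_nonneg_right this (norm_nonneg _)
        _ = ((⟨M, hM⟩ * ‖a‖₊ : NNReal) : ℝ) * ‖y - y'‖ := by
            push_cast; rfl
    refine tendsto_of_lipschitz_dense l _ _ (⟨M, hM⟩ * ‖a‖₊)
      (fun j => hlip (T j) (hT j)) (hlip T₀ hT₀) hdense ?_
    -- convergence on S in the second variable
    intro z hz
    induction hz using Submodule.span_induction with
    | mem z hz =>
      obtain ⟨i', hi'⟩ := Set.mem_iUnion.mp hz
      obtain ⟨b, rfl⟩ := hi'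
      exact key i i' a b
    | zero => simpa using (tendsto_const_nhds : Tendsto (fun _ : J => (0:ℂ)) l (𝓝 0))
    | add u v hu hv hu' hv' => simpa [inner_add_right] using hu'.add hv'
    | smul c u hu hu' => simpa [inner_smul_right] using hu'.const_mul c
  -- step B: for x in S, all y
  have stepB : ∀ x ∈ S, ∀ (y : lp H 2),
      Tendsto (fun j => ⟪T j x, y⟫) l (𝓝 ⟪T₀ x, y⟫) := by
    intro x hx
    induction hx using Submodule.span_induction with
    | mem z hz =>
      obtain ⟨i', hi'⟩ := Set.mem_iUnion.mp hz
      obtain ⟨b, rfl⟩ := hi'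
      exact stepA i' b
    | zero =>
      intro y
      simpa using (tendsto_const_nhds : Tendsto (fun _ : J => (0:ℂ)) l (𝓝 0))
    | add u v hu hv hu' hv' =>
      intro y
      simpa [inner_add_left] using (hu' y).add (hv' y)
    | smul c u hu hu' =>
      intro y
      simpa [inner_smul_left] using (hu' y).mul_const (starRingEnd ℂ c)
  -- final: extend to all x by density
  have hlip2 : ∀ (A : lp H 2 →L[ℂ] lp H 2), ‖A‖ ≤ M →
      LipschitzWith (⟨M, hM⟩ * ‖y‖₊) (fun x => ⟪A x, y⟫) := by
    intro A hA
    refine LipschitzWith.of_dist_le_mul fun x x' => ?_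
    rw [dist_eq_norm, dist_eq_norm, ← inner_sub_left, ← map_sub]
    calc ‖⟪A (x - x'), y⟫‖ ≤ ‖A (x - x')‖ * ‖y‖ := norm_inner_le_norm _ _
      _ ≤ (M * ‖x - x'‖) * ‖y‖ :=
          mul_le_mul_of_nonneg_right (A.le_of_opNorm_le hA _) (norm_nonneg _)
      _ = ((⟨M, hM⟩ * ‖y‖₊ : NNReal) : ℝ) * ‖x - x'‖ := by show M * ‖x - x'‖ * ‖y‖ = (M * ‖y‖) * ‖x - x'‖; ring
  exact tendsto_of_lipschitz_dense l _ _ (⟨M, hM⟩ * ‖y‖₊)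
    (fun j => hlip2 (T j) (hT j)) (hlip2 T₀ hT₀) hdense
    (fun z hz => stepB z hz y) x
end

section
/- Let C, E, D be bicategories and let G : C ⥤ E be a 0-dominant pseudofunctor. Then for any pseudofunctors A, B : E ⥤ D, any strong natural transformations φ, ψ : A ⟶ B, and any modifications m, n : φ ⟶ ψ, if m.app (G.obj c) = n.app (G.obj c) for every object c of C, then m = n. (Precomposition with a 0-dominant pseudofunctor is faithful on 2-morphisms.) -/
open CategoryTheory

universe w₁ v₁ u₁ w₂ v₂ u₂ w₃ v₃ u₃

/-- A strong natural transformation `φ : A ⟶ B` between pseudofunctors `A, B : E ⥤ D`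
consists of 1-morphisms `φ.app e : A.obj e ⟶ B.obj e` together with invertible naturality
2-morphisms `φ.naturality f : A.map f ≫ φ.app e' ≅ φ.app e ≫ B.map f`. -/
structure PseudoStrongNatTrans {E : Type u₂} [Bicategory.{w₂, v₂} E]
    {D : Type u₃} [Bicategory.{w₃, v₃} D] (A B : Pseudofunctor E D) where
  app : ∀ e : E, A.obj e ⟶ B.obj e
  naturality : ∀ {e e' : E} (f : e ⟶ e'), A.map f ≫ app e' ≅ app e ≫ B.map f

open Bicategory in
/-- A modification `m : φ ⟶ ψ` between strong natural transformations is a family of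
2-morphisms `m.app e : φ.app e ⟶ ψ.app e` compatible with the naturality constraints. -/
structure PseudoModification {E : Type u₂} [Bicategory.{w₂, v₂} E]
    {D : Type u₃} [Bicategory.{w₃, v₃} D] {A B : Pseudofunctor E D}
    (φ ψ : PseudoStrongNatTrans A B) where
  app : ∀ e : E, φ.app e ⟶ ψ.app e
  naturality : ∀ {e e' : E} (f : e ⟶ e'),
    A.map f ◁ app e' ≫ (ψ.naturality f).hom = (φ.naturality f).hom ≫ app e ▷ B.map f

/-- A condensation from `a` to `b` in a bicategory: 1-morphisms `X : a ⟶ b`, `X' : b ⟶ a`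
and 2-morphisms `ε : X' ≫ X ⟶ 𝟙 b`, `δ : 𝟙 b ⟶ X' ≫ X` with `δ ≫ ε = 𝟙 (𝟙 b)`. -/
structure Condensation {B : Type u₁} [Bicategory.{w₁, v₁} B] (a b : B) where
  X : a ⟶ b
  X' : b ⟶ a
  ε : X' ≫ X ⟶ 𝟙 b
  δ : 𝟙 b ⟶ X' ≫ X
  splitting : δ ≫ ε = 𝟙 (𝟙 b)

/-- A pseudofunctor `G : C ⥤ E` is 0-dominant if every object `e` of `E` admits a condensation
from `G.obj c` for some object `c` of `C`. -/
def CategoryTheory.Pseudofunctor.ZeroDominant {C : Type u₁} [Bicategory.{w₁, v₁} C]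
    {E : Type u₂} [Bicategory.{w₂, v₂} E] (G : Pseudofunctor C E) : Prop :=
  ∀ e : E, ∃ c : C, Nonempty (Condensation (G.obj c) e)

open Bicategory

/-- Precomposition with a 0-dominant pseudofunctor is faithful on 2-morphisms: two
modifications agreeing on the image of `G` on objects are equal. -/
theorem precomp_faithful_of_zeroDominant
    {C : Type u₁} [Bicategory.{w₁, v₁} C] {E : Type u₂} [Bicategory.{w₂, v₂} E]
    {D : Type u₃} [Bicategory.{w₃, v₃} D]
    (G : Pseudofunctor C E) (hG : G.ZeroDominant)
    (A B : Pseudofunctor E D) (φ ψ : PseudoStrongNatTrans A B)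
    (m n : PseudoModification φ ψ)
    (h : ∀ c : C, m.app (G.obj c) = n.app (G.obj c)) : m = n := by
  have key : ∀ e : E, m.app e = n.app e := by
    intro e
    obtain ⟨c, ⟨cond⟩⟩ := hG e
    have h1 : A.map cond.X ◁ m.app e = A.map cond.X ◁ n.app e := by
      have hm := m.naturality cond.X
      have hn := n.naturality cond.X
      rw [h c] at hm
      exact (cancel_mono (ψ.naturality cond.X).hom).mp (hm.trans hn.symm)
    have h2 : A.map (cond.X' ≫ cond.X) ◁ m.app e
        = A.map (cond.X' ≫ cond.X) ◁ n.app e := by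
      rw [← cancel_mono ((A.mapComp cond.X' cond.X).hom ▷ ψ.app e),
        whisker_exchange, whisker_exchange, comp_whiskerLeft, comp_whiskerLeft, h1]
    set θ := (A.mapId e).inv ≫ A.map₂ cond.4 with hθ
    set η' := A.map₂ cond.3 ≫ (A.mapId e).hom with hη
    have hθη : θ ≫ η' = 𝟙 (𝟙 (A.obj e)) := by
      rw [hθ, hη, Category.assoc, ← Category.assoc (A.map₂ cond.4),
        ← A.map₂_comp, cond.splitting, A.map₂_id]
      simp
    have em : ∀ x : φ.app e ⟶ ψ.app e,
        (θ ▷ φ.app e) ≫ (A.map (cond.X' ≫ cond.X) ◁ x) ≫ (η' ▷ ψ.app e)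
          = 𝟙 (A.obj e) ◁ x := by
      intro x
      rw [whisker_exchange, ← comp_whiskerRight_assoc, hθη, id_whiskerRight,
        Category.id_comp]
    have h3 : 𝟙 (A.obj e) ◁ m.app e = 𝟙 (A.obj e) ◁ n.app e := by
      rw [← em (m.app e), ← em (n.app e), h2]
    rw [id_whiskerLeft, id_whiskerLeft] at h3
    simpa using h3
  cases m with | mk mapp mnat =>
  cases n with | mk napp nnat =>
  congr 1
  funext e
  exact key e
end

section
/- Let E, D be bicategories, A, B : E ⥤ D pseudofunctors, φ, ψ : A ⟶ B strong natural transformations, and m, n : φ ⟶ ψ modifications. Suppose e₀ and e are objects of E admitting a condensation from e₀ to e. If m.app e₀ = n.app e₀, then m.app e = n.app e. -/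
open CategoryTheory

universe w₁ v₁ u₁ w₂ v₂ u₂ w₃ v₃ u₃

open Bicategory

lemma whiskerLeft_cancel_of_split {C : Type u₁} [Bicategory.{w₁, v₁} C]
    {a₀ a b : C} (x : a₀ ⟶ a) (x' : a ⟶ a₀)
    (ε' : x' ≫ x ⟶ 𝟙 a) (δ : 𝟙 a ⟶ x' ≫ x) (hs : δ ≫ ε' = 𝟙 (𝟙 a))
    {p q : a ⟶ b} (η θ : p ⟶ q) (hw : x ◁ η = x ◁ θ) : η = θ := by
  have h2 : (x' ≫ x) ◁ η = (x' ≫ x) ◁ θ := by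
    rw [comp_whiskerLeft, comp_whiskerLeft, hw]
  have e1 : ∀ ξ : p ⟶ q, 𝟙 a ◁ ξ = δ ▷ p ≫ (x' ≫ x) ◁ ξ ≫ ε' ▷ q := by
    intro ξ
    rw [← whisker_exchange_assoc, ← comp_whiskerRight, hs, id_whiskerRight, Category.comp_id]
  have h3 : 𝟙 a ◁ η = 𝟙 a ◁ θ := by rw [e1, e1, h2]
  calc η = (λ_ p).inv ≫ 𝟙 a ◁ η ≫ (λ_ q).hom := by
            rw [leftUnitor_naturality, Iso.inv_hom_id_assoc]
    _ = (λ_ p).inv ≫ 𝟙 a ◁ θ ≫ (λ_ q).hom := by rw [h3]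
    _ = θ := by rw [leftUnitor_naturality, Iso.inv_hom_id_assoc]

/-- If two modifications agree at an object `e₀` admitting a condensation onto `e`, then
they agree at `e`. -/
theorem modification_app_eq_of_condensation
    {E : Type u₂} [Bicategory.{w₂, v₂} E] {D : Type u₃} [Bicategory.{w₃, v₃} D]
    (A B : Pseudofunctor E D) (φ ψ : PseudoStrongNatTrans A B)
    (m n : PseudoModification φ ψ)
    (e₀ e : E) (cond : Condensation e₀ e)
    (h : m.app e₀ = n.app e₀) : m.app e = n.app e := by
  have key : A.map cond.X ◁ m.app e = A.map cond.X ◁ n.app e := by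
    have hm := m.naturality cond.X
    have hn := n.naturality cond.X
    rw [← cancel_mono (ψ.naturality cond.X).hom, hm, hn, h]
  refine whiskerLeft_cancel_of_split (A.map cond.X) (A.map cond.X')
    ((A.mapComp cond.X' cond.X).inv ≫ A.map₂ cond.ε ≫ (A.mapId e).hom)
    ((A.mapId e).inv ≫ A.map₂ cond.δ ≫ (A.mapComp cond.X' cond.X).hom)
    ?_ (m.app e) (n.app e) key
  rw [Category.assoc, Category.assoc, Iso.hom_inv_id_assoc, ← A.map₂_comp_assoc,
    cond.splitting, A.map₂_id, Category.id_comp, Iso.inv_hom_id]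
end
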